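/- If a reflexive undirected graph H (viewed as a symmetric digraph) contains an induced 4-cycle C_4, then H has no Min-Max ordering. -/

import Mathlib

/-- `lt` is a Min-Max ordering of the digraph with arc relation `A`. -/
def IsMinMaxOrdering {V : Type*} (A : V → V → Prop) (lt : V → V → Prop) : Prop :=
  IsStrictTotalOrder V lt ∧
    ∀ i j s r : V, lt i j → lt s r → A i r → A j s → A i s ∧ A j r

/-- The digraph with arc relation `A` admits a Min-Max ordering. -/
def HasMinMaxOrdering {V : Type*} (A : V → V → Prop) : Prop :=
  ∃ lt : V → V → Prop, IsMinMaxOrdering A lt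

/-- A reflexive undirected graph containing an induced $C_4$ has no Min-Max ordering. -/
theorem stmt15 {V : Type*} (E : V → V → Prop) (hsymm : ∀ x y, E x y → E y x)
    (hrefl : ∀ x, E x x) (a b c d : V)
    (hdist : [a, b, c, d].Pairwise (· ≠ ·))
    (hab : E a b) (hbc : E b c) (hcd : E c d) (hda : E d a)
    (hac : ¬ E a c) (hbd : ¬ E b d) :
    ¬ HasMinMaxOrdering E := by
  rintro ⟨lt, hsto, hmm⟩
  have hneab : a ≠ b := (List.pairwise_cons.mp hdist).1 b (by simp)
  have hnead : a ≠ d := (List.pairwise_cons.mp hdist).1 d (by simp)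
  have hnebc : b ≠ c :=
    (List.pairwise_cons.mp (List.pairwise_cons.mp hdist).2).1 c (by simp)
  have hnecd : c ≠ d :=
    (List.pairwise_cons.mp (List.pairwise_cons.mp (List.pairwise_cons.mp hdist).2).2).1 d
      (by simp)
  have tri : ∀ x y : V, x ≠ y → lt x y ∨ lt y x := by
    intro x y hxy
    rcases (show lt x y ∨ x = y ∨ lt y x by
      by_contra hc; push_neg at hc; exact hc.2.1 (hsto.trichotomous x y hc.1 hc.2.2)) with h | h | h
    · exact Or.inl h
    · exact absurd h hxy
    · exact Or.inr h
  have htrans : ∀ x y z : V, lt x y → lt y z → lt x z := fun x y z => hsto.trans x y z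
  have hasymm : ∀ x y : V, lt x y → lt y x → False := fun x y h1 h2 =>
    hsto.irrefl x (htrans x y x h1 h2)
  -- if u is above both x and y, and u is adjacent to both, then x y adjacent
  have habove : ∀ x y u : V, lt x u → lt y u → E x u → E u y → E x y := by
    intro x y u h1 h2 e1 e2
    exact (hmm x u y u h1 h2 e1 e2).1
  -- if u is below both x and y, and u is adjacent to both, then y x adjacent
  have hbelow : ∀ x y u : V, lt u x → lt u y → E u x → E y u → E y x := by
    intro x y u h1 h2 e1 e2
    exact (hmm u y u x h2 h1 e1 e2).2
  have aMin : lt a b → lt a d → False := fun h1 h2 =>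
    hbd (hsymm _ _ (hbelow b d a h1 h2 hab hda))
  have aMax : lt b a → lt d a → False := fun h1 h2 =>
    hbd (habove b d a h1 h2 (hsymm _ _ hab) (hsymm _ _ hda))
  have cMin : lt c b → lt c d → False := fun h1 h2 =>
    hbd (hsymm _ _ (hbelow b d c h1 h2 (hsymm _ _ hbc) (hsymm _ _ hcd)))
  have cMax : lt b c → lt d c → False := fun h1 h2 =>
    hbd (habove b d c h1 h2 hbc hcd)
  have bMin : lt b a → lt b c → False := fun h1 h2 =>
    hac (hsymm _ _ (hbelow a c b h1 h2 (hsymm _ _ hab) (hsymm _ _ hbc)))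
  have bMax : lt a b → lt c b → False := fun h1 h2 =>
    hac (habove a c b h1 h2 hab hbc)
  have dMin : lt d a → lt d c → False := fun h1 h2 =>
    hac (hsymm _ _ (hbelow a c d h1 h2 hda hcd))
  have dMax : lt a d → lt c d → False := fun h1 h2 =>
    hac (habove a c d h1 h2 (hsymm _ _ hda) (hsymm _ _ hcd))
  rcases tri a b hneab with P | P <;> rcases tri a d hnead with Q | Q <;>
    rcases tri b c hnebc with R | R <;> rcases tri c d hnecd with S | S
  · exact aMin P Q
  · exact aMin P Q
  · exact aMin P Q
  · exact aMin P Q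
  · -- P : lt a b, Q : lt d a, R : lt b c, S : lt c d : cycle d<a<b<c<d
    exact hasymm c d S (htrans d a c Q (htrans a b c P R))
  · exact dMin Q S
  · exact bMax P R
  · exact bMax P R
  · exact bMin P R
  · exact bMin P R
  · exact cMin R S
  · -- P : lt b a, Q : lt a d, R : lt c b, S : lt d c : cycle c<b<a<d<c
    exact hasymm c b R (htrans b a c P (htrans a d c Q S))
  · exact aMax P Q
  · exact aMax P Q
  · exact aMax P Q
  · exact aMax P Q
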